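/- If V is a vector space of odd dimension at least 3 over a finite field of odd characteristic, then the exterior algebra Λ(V) is a finite, noncommutative, centrally essential ring. -/

import Mathlib

/-- A ring is *centrally essential* if, as a module over its center, it is an
essential extension of its center. -/
def IsCentrallyEssential (R : Type*) [Ring R] : Prop :=
  ∀ r : R, r ≠ 0 → ∃ c ∈ Subring.center R, c * r ≠ 0 ∧ c * r ∈ Subring.center R


open ExteriorAlgebra

namespace CEExt

variable {F : Type*} [Field F] {V : Type*} [AddCommGroup V] [Module F V]
variable {n : ℕ} (b : Module.Basis (Fin n) F V)

/-- sign predicate -/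
def Sgn (ε : F) : Prop := ε = 1 ∨ ε = -1

lemma Sgn.mul {ε ε' : F} (h : Sgn ε) (h' : Sgn ε') : Sgn (ε * ε') := by
  rcases h with h | h <;> rcases h' with h' | h' <;> simp [Sgn, h, h']

lemma Sgn.ne_zero {ε : F} (h : Sgn ε) : ε ≠ 0 := by
  rcases h with h | h <;> simp [h]

lemma Sgn.one : Sgn (1 : F) := Or.inl rfl

noncomputable def e (i : Fin n) : ExteriorAlgebra F V := ExteriorAlgebra.ι F (b i)

noncomputable def m (l : List (Fin n)) : ExteriorAlgebra F V := (l.map (e b)).prod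

noncomputable def mS (S : Finset (Fin n)) : ExteriorAlgebra F V := m b (S.sort (· ≤ ·))

@[simp] lemma m_nil : m b [] = 1 := rfl

lemma m_cons (i : Fin n) (l : List (Fin n)) : m b (i :: l) = e b i * m b l := by
  simp [m]

lemma m_append (l₁ l₂ : List (Fin n)) : m b (l₁ ++ l₂) = m b l₁ * m b l₂ := by
  simp [m]

lemma anticomm (v w : V) :
    ExteriorAlgebra.ι F v * ExteriorAlgebra.ι F w
      = -(ExteriorAlgebra.ι F w * ExteriorAlgebra.ι F v) :=
  eq_neg_of_add_eq_zero_left (ExteriorAlgebra.ι_add_mul_swap v w)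

lemma lemA (l : List (Fin n)) (v : V) :
    ExteriorAlgebra.ι F v * m b l = ((-1 : F) ^ l.length) • (m b l * ExteriorAlgebra.ι F v) := by
  induction l with
  | nil => simp
  | cons j t ih =>
    have hje : e b j = ExteriorAlgebra.ι F (b j) := rfl
    rw [m_cons, ← mul_assoc, hje, anticomm (F := F) v (b j), neg_mul, mul_assoc, ih]
    rw [List.length_cons, pow_succ]
    simp only [Algebra.mul_smul_comm, smul_smul, mul_assoc]
    rw [← neg_smul]
    ring_nf

lemma lemB (l : List (Fin n)) (i : Fin n) (h : i ∈ l) : e b i * m b l = 0 := by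
  induction l with
  | nil => simp at h
  | cons j t ih =>
    rw [m_cons, ← mul_assoc]
    rcases List.mem_cons.mp h with h | h
    · subst h
      rw [show e b i * e b i = 0 from ExteriorAlgebra.ι_sq_zero _, zero_mul]
    · rw [show (e b i * e b j : ExteriorAlgebra F V) = -(e b j * e b i) from anticomm _ _,
        neg_mul, mul_assoc, ih h, mul_zero, neg_zero]

lemma m_eq_zero_of_not_nodup (l : List (Fin n)) (h : ¬ l.Nodup) : m b l = 0 := by
  induction l with
  | nil => simp at h
  | cons j t ih =>
    rw [m_cons]
    by_cases hj : j ∈ t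
    · rw [lemB b t j hj]
    · have : ¬ t.Nodup := by
        intro ht; exact h (List.nodup_cons.mpr ⟨hj, ht⟩)
      rw [ih this, mul_zero]

lemma lemC {l l' : List (Fin n)} (h : l.Perm l') : ∃ ε : F, Sgn ε ∧ m b l = ε • m b l' := by
  induction h with
  | nil => exact ⟨1, Sgn.one, by simp⟩
  | cons x _ ih =>
    obtain ⟨ε, hε, hm⟩ := ih
    exact ⟨ε, hε, by rw [m_cons, hm, m_cons, Algebra.mul_smul_comm]⟩
  | swap x y t =>
    refine ⟨-1, Or.inr rfl, ?_⟩
    rw [m_cons, m_cons, m_cons, m_cons, ← mul_assoc, ← mul_assoc,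
      show (e b y * e b x : ExteriorAlgebra F V) = -(e b x * e b y) from anticomm _ _]
    simp
  | trans _ _ ih₁ ih₂ =>
    obtain ⟨ε₁, hε₁, hm₁⟩ := ih₁
    obtain ⟨ε₂, hε₂, hm₂⟩ := ih₂
    exact ⟨ε₁ * ε₂, hε₁.mul hε₂, by rw [hm₁, hm₂, smul_smul]⟩

lemma mS_mul_of_disjoint {S T : Finset (Fin n)} (h : Disjoint S T) :
    ∃ ε : F, Sgn ε ∧ mS b S * mS b T = ε • mS b (S ∪ T) := by
  have hperm : (S.sort (· ≤ ·) ++ T.sort (· ≤ ·)).Perm ((S ∪ T).sort (· ≤ ·)) := by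
    apply List.perm_of_nodup_nodup_toFinset_eq
    · rw [List.nodup_append]
      exact ⟨S.sort_nodup _, T.sort_nodup _, by
        intro a ha c hc hac
        subst hac
        exact Finset.disjoint_left.mp h (by simpa using ha) (by simpa using hc)⟩
    · exact Finset.sort_nodup _ _
    · simp [Finset.sort_toFinset]
  obtain ⟨ε, hε, hm⟩ := lemC b hperm
  exact ⟨ε, hε, by rw [mS, mS, mS, ← m_append, hm]⟩

lemma mS_mul_of_not_disjoint {S T : Finset (Fin n)} (h : ¬ Disjoint S T) :
    mS b S * mS b T = 0 := by
  rw [mS, mS, ← m_append]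
  apply m_eq_zero_of_not_nodup
  rw [List.nodup_append]
  rintro ⟨-, -, hd⟩
  obtain ⟨a, haS, haT⟩ := Finset.not_disjoint_iff.mp h
  exact hd a (by simpa using haS) a (by simpa using haT) rfl

lemma e_eq_mS (i : Fin n) : e b i = mS b {i} := by
  simp [mS, Finset.sort_singleton, m_cons]

lemma e_mul_mS_of_not_mem {i : Fin n} {S : Finset (Fin n)} (h : i ∉ S) :
    ∃ ε : F, Sgn ε ∧ e b i * mS b S = ε • mS b (insert i S) := by
  obtain ⟨ε, hε, hm⟩ := mS_mul_of_disjoint b (Finset.disjoint_singleton_left.mpr h) (T := S)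
  refine ⟨ε, hε, ?_⟩
  rw [e_eq_mS, hm, ← Finset.insert_eq]

lemma e_mul_mS_of_mem {i : Fin n} {S : Finset (Fin n)} (h : i ∈ S) :
    e b i * mS b S = 0 :=
  lemB b _ i (by simpa using h)

end CEExt

namespace CEExt2
open CEExt

variable {F : Type*} [Field F] {V : Type*} [AddCommGroup V] [Module F V]
variable {n : ℕ} (b : Module.Basis (Fin n) F V)

lemma e_mul_mem {i : Fin n} {x : ExteriorAlgebra F V}
    (hx : x ∈ Submodule.span F (Set.range (mS b))) :
    e b i * x ∈ Submodule.span F (Set.range (mS b)) := by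
  classical
  induction hx using Submodule.span_induction with
  | mem x hx =>
    obtain ⟨S, rfl⟩ := hx
    by_cases h : i ∈ S
    · rw [e_mul_mS_of_mem b h]; exact zero_mem _
    · obtain ⟨ε, hε, hm⟩ := e_mul_mS_of_not_mem b h
      rw [hm]
      exact Submodule.smul_mem _ _ (Submodule.subset_span ⟨_, rfl⟩)
  | zero => rw [mul_zero]; exact zero_mem _
  | add x y _ _ hx hy => rw [mul_add]; exact add_mem hx hy
  | smul c x _ hx => rw [Algebra.mul_smul_comm]; exact Submodule.smul_mem _ _ hx

lemma m_mem_span (l : List (Fin n)) : m b l ∈ Submodule.span F (Set.range (mS b)) := by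
  induction l with
  | nil =>
    have : m b ([] : List (Fin n)) = mS b ∅ := by simp [mS, Finset.sort_empty]
    rw [this]; exact Submodule.subset_span ⟨_, rfl⟩
  | cons i t ih =>
    rw [m_cons]; exact e_mul_mem b ih

lemma span_mS : Submodule.span F (Set.range (mS b)) = ⊤ := by
  rw [eq_top_iff]
  rintro x -
  induction x using ExteriorAlgebra.induction with
  | algebraMap r =>
    rw [Algebra.algebraMap_eq_smul_one]
    have : (1 : ExteriorAlgebra F V) = mS b ∅ := by simp [mS, Finset.sort_empty]
    rw [this]
    exact Submodule.smul_mem _ _ (Submodule.subset_span ⟨_, rfl⟩)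
  | ι v =>
    rw [← b.sum_repr v, map_sum]
    refine Submodule.sum_mem _ fun i _ => ?_
    rw [map_smul]
    refine Submodule.smul_mem _ _ ?_
    have : ExteriorAlgebra.ι F (b i) = m b [i] := by simp [m_cons, e]
    rw [this]
    exact m_mem_span b [i]
  | mul a₁ a₂ h₁ h₂ =>
    induction h₁ using Submodule.span_induction with
    | mem x hx =>
      obtain ⟨S, rfl⟩ := hx
      induction h₂ using Submodule.span_induction with
      | mem y hy =>
        obtain ⟨T, rfl⟩ := hy
        rw [show mS b S * mS b T = m b (S.sort (· ≤ ·) ++ T.sort (· ≤ ·)) from (m_append b _ _).symm]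
        exact m_mem_span b _
      | zero => rw [mul_zero]; exact zero_mem _
      | add x y _ _ hx hy => rw [mul_add]; exact add_mem hx hy
      | smul c x _ hx => rw [Algebra.mul_smul_comm]; exact Submodule.smul_mem _ _ hx
    | zero => rw [zero_mul]; exact zero_mem _
    | add x y _ _ hx hy => rw [add_mul]; exact add_mem hx hy
    | smul c x _ hx => rw [Algebra.smul_mul_assoc]; exact Submodule.smul_mem _ _ hx
  | add a₁ a₂ h₁ h₂ => exact add_mem h₁ h₂

end CEExt2

namespace CEExt3
open CEExt CEExt2

variable {F : Type*} [Field F] {V : Type*} [AddCommGroup V] [Module F V]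
variable {n : ℕ} (b : Module.Basis (Fin n) F V)

noncomputable def contr (i : Fin n) :
    ExteriorAlgebra F V →ₗ[F] ExteriorAlgebra F V :=
  CliffordAlgebra.contractLeft (Q := (0 : QuadraticForm F V)) (b.coord i)

lemma contr_ι_mul (i : Fin n) (v : V) (x : ExteriorAlgebra F V) :
    contr b i (ExteriorAlgebra.ι F v * x)
      = b.coord i v • x - ExteriorAlgebra.ι F v * contr b i x :=
  CliffordAlgebra.contractLeft_ι_mul (Q := (0 : QuadraticForm F V)) (d := b.coord i) v x

@[simp] lemma contr_one (i : Fin n) : contr b i (1 : ExteriorAlgebra F V) = 0 :=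
  CliffordAlgebra.contractLeft_one (0 : QuadraticForm F V) (b.coord i)

lemma coord_apply_basis (i j : Fin n) :
    b.coord i (b j) = if i = j then (1 : F) else 0 := by
  rw [Module.Basis.coord_apply, Module.Basis.repr_self_apply]
  simp [eq_comm]

lemma contr_m_not_mem (i : Fin n) (t : List (Fin n)) (h : i ∉ t) :
    contr b i (m b t) = 0 := by
  induction t with
  | nil => simp
  | cons j t' ih =>
    have hij : i ≠ j := fun hh => h (hh ▸ List.mem_cons_self)
    rw [m_cons, e, contr_ι_mul, coord_apply_basis, if_neg hij, zero_smul,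
      ih (fun hh => h (List.mem_cons_of_mem _ hh)), mul_zero, sub_zero]

lemma contr_m_mem (i : Fin n) (t : List (Fin n)) (ht : t.Nodup) (h : i ∈ t) :
    ∃ ε : F, Sgn ε ∧ contr b i (m b t) = ε • m b (t.erase i) := by
  induction t with
  | nil => simp at h
  | cons j t' ih =>
    rcases List.mem_cons.mp h with rfl | h'
    · refine ⟨1, Sgn.one, ?_⟩
      rw [m_cons, e, contr_ι_mul, coord_apply_basis, if_pos rfl,
        contr_m_not_mem b i t' (List.nodup_cons.mp ht).1, mul_zero, sub_zero,
        List.erase_cons_head, one_smul]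
    · have hij : i ≠ j := by
        rintro rfl
        exact (List.nodup_cons.mp ht).1 h'
      obtain ⟨ε, hε, hm⟩ := ih (List.nodup_cons.mp ht).2 h'
      refine ⟨-ε, by rcases hε with h1 | h1 <;> simp [Sgn, h1], ?_⟩
      rw [m_cons, e, contr_ι_mul, coord_apply_basis, if_neg hij, zero_smul, zero_sub, hm,
        List.erase_cons_tail, m_cons]
      · rw [Algebra.mul_smul_comm, ← neg_smul, e]
      · simpa using fun hh => hij hh.symm

noncomputable def cont : List (Fin n) → (ExteriorAlgebra F V →ₗ[F] ExteriorAlgebra F V)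
  | [] => LinearMap.id
  | i :: l => (cont l).comp (contr b i)

noncomputable def coefL (l : List (Fin n)) : ExteriorAlgebra F V →ₗ[F] F :=
  (ExteriorAlgebra.algebraMapInv (R := F) (M := V)).toLinearMap.comp (cont b l)

lemma coefL_nil (x : ExteriorAlgebra F V) :
    coefL b [] x = ExteriorAlgebra.algebraMapInv x := rfl

lemma coefL_cons (i : Fin n) (l : List (Fin n)) (x : ExteriorAlgebra F V) :
    coefL b (i :: l) x = coefL b l (contr b i x) := rfl

lemma algebraMapInv_ι (v : V) :
    ExteriorAlgebra.algebraMapInv (ExteriorAlgebra.ι F v) = (0 : F) := by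
  simp [ExteriorAlgebra.algebraMapInv]

lemma algebraMapInv_m_ne_nil (t : List (Fin n)) (h : t ≠ []) :
    ExteriorAlgebra.algebraMapInv (m b t) = (0 : F) := by
  cases t with
  | nil => exact absurd rfl h
  | cons j t' =>
    rw [m_cons, map_mul, e, algebraMapInv_ι, zero_mul]

lemma toFinset_erase_of_nodup (t : List (Fin n)) (ht : t.Nodup) (i : Fin n) :
    (t.erase i).toFinset = t.toFinset.erase i := by
  ext a
  simp [List.Nodup.mem_erase_iff ht, Finset.mem_erase, List.mem_toFinset, and_comm]

lemma coefL_m_ne (l : List (Fin n)) : ∀ t : List (Fin n), t.Nodup →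
    t.toFinset ≠ l.toFinset → coefL b l (m b t) = 0 := by
  induction l with
  | nil =>
    intro t ht hne
    have htne : t ≠ [] := by
      rintro rfl; simp at hne
    rw [coefL_nil, algebraMapInv_m_ne_nil b t htne]
  | cons i l' ih =>
    intro t ht hne
    rw [coefL_cons]
    by_cases hi : i ∈ t
    · obtain ⟨ε, hε, hm⟩ := contr_m_mem b i t ht hi
      rw [hm, map_smul]
      have : (t.erase i).toFinset ≠ l'.toFinset := by
        intro heq
        apply hne
        rw [List.toFinset_cons, ← heq, toFinset_erase_of_nodup t ht i,
          Finset.insert_erase (List.mem_toFinset.mpr hi)]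
      rw [ih _ (ht.erase i) this, smul_zero]
    · rw [contr_m_not_mem b i t hi, map_zero]

lemma coefL_m_eq (l : List (Fin n)) : ∀ t : List (Fin n), t.Nodup → l.Nodup →
    t.toFinset = l.toFinset → ∃ ε : F, Sgn ε ∧ coefL b l (m b t) = ε := by
  induction l with
  | nil =>
    intro t ht _ heq
    have : t = [] := by
      simpa [List.toFinset_eq_empty_iff] using heq
    subst this
    exact ⟨1, Sgn.one, by simp [coefL_nil]⟩
  | cons i l' ih =>
    intro t ht hl heq
    have hi : i ∈ t := by
      rw [← List.mem_toFinset, heq]; simp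
    obtain ⟨ε, hε, hm⟩ := contr_m_mem b i t ht hi
    have hil' : i ∉ l' := (List.nodup_cons.mp hl).1
    have heq' : (t.erase i).toFinset = l'.toFinset := by
      rw [toFinset_erase_of_nodup t ht i, heq, List.toFinset_cons,
        Finset.erase_insert (fun hh => hil' (List.mem_toFinset.mp hh))]
    obtain ⟨ε', hε', hm'⟩ := ih (t.erase i) (ht.erase i) (List.nodup_cons.mp hl).2 heq'
    refine ⟨ε * ε', hε.mul hε', ?_⟩
    rw [coefL_cons, hm, map_smul, hm', smul_eq_mul]

noncomputable def coefS (S : Finset (Fin n)) : ExteriorAlgebra F V →ₗ[F] F :=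
  coefL b (S.sort (· ≤ ·))

lemma coefS_mS_ne {S T : Finset (Fin n)} (h : T ≠ S) : coefS b S (mS b T) = 0 := by
  apply coefL_m_ne b _ _ (Finset.sort_nodup _ _)
  rw [Finset.sort_toFinset, Finset.sort_toFinset]
  exact h

lemma coefS_mS_eq (S : Finset (Fin n)) :
    ∃ ε : F, Sgn ε ∧ coefS b S (mS b S) = ε := by
  apply coefL_m_eq b _ _ (Finset.sort_nodup _ _) (Finset.sort_nodup _ _)
  rfl

lemma mS_ne_zero (S : Finset (Fin n)) : mS b S ≠ 0 := by
  obtain ⟨ε, hε, hm⟩ := coefS_mS_eq b S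
  intro h
  rw [h, map_zero] at hm
  exact hε.ne_zero hm.symm

end CEExt3

namespace CEExt4
open CEExt CEExt2 CEExt3

variable {F : Type*} [Field F] {V : Type*} [AddCommGroup V] [Module F V]
variable {n : ℕ} (b : Module.Basis (Fin n) F V)

lemma mem_center_of_commutes_ι (x : ExteriorAlgebra F V)
    (h : ∀ v : V, ExteriorAlgebra.ι F v * x = x * ExteriorAlgebra.ι F v) :
    x ∈ Subring.center (ExteriorAlgebra F V) := by
  rw [Subring.mem_center_iff]
  intro g
  induction g using ExteriorAlgebra.induction with
  | algebraMap r => exact Algebra.commutes r x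
  | ι v => exact h v
  | mul a₁ a₂ h₁ h₂ => rw [mul_assoc, h₂, ← mul_assoc, h₁, mul_assoc]
  | add a₁ a₂ h₁ h₂ => rw [add_mul, mul_add, h₁, h₂]

lemma mS_mem_center_of_even {S : Finset (Fin n)} (h : Even S.card) :
    mS b S ∈ Subring.center (ExteriorAlgebra F V) := by
  apply mem_center_of_commutes_ι
  intro v
  have := lemA b (S.sort (· ≤ ·)) v
  rw [Finset.length_sort] at this
  rw [mS, this, Even.neg_one_pow h, one_smul]

lemma ι_mul_mS_univ (v : V) :
    ExteriorAlgebra.ι F v * mS b (Finset.univ : Finset (Fin n)) = 0 := by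
  rw [← b.sum_repr v, map_sum, Finset.sum_mul]
  refine Finset.sum_eq_zero fun i _ => ?_
  rw [map_smul, Algebra.smul_mul_assoc,
    show ExteriorAlgebra.ι F (b i) = e b i from rfl,
    e_mul_mS_of_mem b (Finset.mem_univ i), smul_zero]

lemma mS_univ_mem_center :
    mS b (Finset.univ : Finset (Fin n)) ∈ Subring.center (ExteriorAlgebra F V) := by
  apply mem_center_of_commutes_ι
  intro v
  rw [ι_mul_mS_univ]
  have := lemA b ((Finset.univ : Finset (Fin n)).sort (· ≤ ·)) v
  rw [show m b ((Finset.univ : Finset (Fin n)).sort (· ≤ ·)) = mS b Finset.univ from rfl,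
    ι_mul_mS_univ] at this
  have h2 : ((-1 : F) ^ ((Finset.univ : Finset (Fin n)).sort (· ≤ ·)).length) ≠ 0 := by
    apply pow_ne_zero; norm_num
  rcases smul_eq_zero.mp this.symm with h | h
  · exact absurd h h2
  · rw [h]

lemma smul_mem_center {c : F} {x : ExteriorAlgebra F V}
    (h : x ∈ Subring.center (ExteriorAlgebra F V)) :
    c • x ∈ Subring.center (ExteriorAlgebra F V) := by
  rw [Algebra.smul_def]
  exact Subring.mul_mem _ (by
    rw [Subring.mem_center_iff]
    intro g
    exact (Algebra.commutes c g).symm) h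

lemma key (hn : Odd n) (r : ExteriorAlgebra F V) (c : Finset (Fin n) → F)
    (hr : ∑ S, c S • mS b S = r) (S₀ : Finset (Fin n)) (hS₀ : c S₀ ≠ 0)
    (hmin : ∀ S, c S ≠ 0 → S₀.card ≤ S.card)
    (U : Finset (Fin n)) (hU1 : U ⊆ S₀ᶜ) (hU2 : Even U.card)
    (hU3 : n - 1 ≤ U.card + S₀.card) :
    mS b U * r ≠ 0 ∧ mS b U * r ∈ Subring.center (ExteriorAlgebra F V) := by
  classical
  have hdisj₀ : Disjoint U S₀ := Finset.disjoint_left.mpr fun a ha ha' =>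
    (Finset.mem_compl.mp (hU1 ha)) ha'
  have hexp : mS b U * r = ∑ S, c S • (mS b U * mS b S) := by
    rw [← hr, Finset.mul_sum]
    exact Finset.sum_congr rfl fun S _ => Algebra.mul_smul_comm _ _ _
  constructor
  · -- nonzero: apply coefS (U ∪ S₀)
    intro hzero
    have happ : coefS b (U ∪ S₀) (mS b U * r) = 0 := by rw [hzero, map_zero]
    rw [hexp, map_sum] at happ
    have hsingle : ∀ S ∈ Finset.univ, S ≠ S₀ →
        coefS b (U ∪ S₀) (c S • (mS b U * mS b S)) = 0 := by
      intro S _ hS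
      rw [map_smul, smul_eq_mul]
      by_cases hd : Disjoint U S
      · obtain ⟨ε, hε, hm⟩ := mS_mul_of_disjoint b hd
        have hne : U ∪ S ≠ U ∪ S₀ := by
          intro heq
          apply hS
          have h1 : S = (U ∪ S) \ U := by
            rw [Finset.union_sdiff_cancel_left hd]
          have h2 : S₀ = (U ∪ S₀) \ U := by
            rw [Finset.union_sdiff_cancel_left hdisj₀]
          rw [h1, h2, heq]
        rw [hm, map_smul, smul_eq_mul, coefS_mS_ne b hne, mul_zero, mul_zero]
      · rw [mS_mul_of_not_disjoint b hd, map_zero, mul_zero]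
    rw [Finset.sum_eq_single S₀ hsingle (by simp)] at happ
    obtain ⟨ε, hε, hm⟩ := mS_mul_of_disjoint b hdisj₀
    obtain ⟨ε', hε', hm'⟩ := coefS_mS_eq b (U ∪ S₀)
    rw [map_smul, smul_eq_mul, hm, map_smul, smul_eq_mul, hm'] at happ
    exact (mul_ne_zero hS₀ (mul_ne_zero hε.ne_zero hε'.ne_zero)) happ
  · -- central
    rw [hexp]
    refine Subring.sum_mem _ fun S _ => ?_
    by_cases hc : c S = 0
    · rw [hc, zero_smul]; exact Subring.zero_mem _
    by_cases hd : Disjoint U S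
    · obtain ⟨ε, hε, hm⟩ := mS_mul_of_disjoint b hd
      rw [hm]
      apply smul_mem_center
      apply smul_mem_center
      have hcard : (U ∪ S).card = U.card + S.card := Finset.card_union_of_disjoint hd
      have hle : n - 1 ≤ (U ∪ S).card := by
        rw [hcard]
        exact le_trans hU3 (Nat.add_le_add_left (hmin S hc) _)
      have hub : (U ∪ S).card ≤ n := by
        have := Finset.card_le_univ (U ∪ S)
        simpa using this
      rcases Nat.lt_or_ge (U ∪ S).card n with hlt | hge
      · -- card = n - 1, even
        have hcard' : (U ∪ S).card = n - 1 := le_antisymm (by omega) hle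
        apply mS_mem_center_of_even
        rw [hcard']
        exact Nat.Odd.sub_odd hn odd_one
      · -- card = n, so U ∪ S = univ
        have : U ∪ S = Finset.univ := by
          apply Finset.eq_univ_of_card
          simpa using le_antisymm hub hge
        rw [this]
        exact mS_univ_mem_center b
    · rw [mS_mul_of_not_disjoint b hd, smul_zero]
      exact Subring.zero_mem _

end CEExt4

section Main
open CEExt CEExt2 CEExt3 CEExt4

theorem exteriorAlgebra_finite_noncommutative_centrallyEssential
    (F : Type*) [Field F] [Finite F] (hchar : Odd (ringChar F))
    (V : Type*) [AddCommGroup V] [Module F V] [FiniteDimensional F V]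
    (hodd : Odd (Module.finrank F V)) (hdim : 3 ≤ Module.finrank F V) :
    Finite (ExteriorAlgebra F V) ∧
      (∃ a b : ExteriorAlgebra F V, a * b ≠ b * a) ∧
      IsCentrallyEssential (ExteriorAlgebra F V) := by
  classical
  set n := Module.finrank F V with hn
  let b : Module.Basis (Fin n) F V := Module.finBasis F V
  have htwo : (2 : F) ≠ 0 := by
    intro h2
    have hdvd : ringChar F ∣ 2 := by
      rw [← ringChar.spec F 2]
      exact_mod_cast h2
    rcases (Nat.dvd_prime Nat.prime_two).mp hdvd with h1 | h1
    · have : ((1 : ℕ) : F) = 0 := (ringChar.spec F 1).mpr (h1 ▸ dvd_refl _)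
      simpa using this
    · rw [h1] at hchar
      simp [Nat.odd_iff] at hchar
  have hspan := span_mS b
  refine ⟨?_, ?_, ?_⟩
  · -- Finite
    have : Module.Finite F (ExteriorAlgebra F V) :=
      ⟨Submodule.fg_def.mpr ⟨Set.range (mS b), Set.finite_range _, hspan⟩⟩
    exact Module.finite_of_finite F
  · -- noncommutative
    have h0 : (0 : ℕ) < n := by omega
    have h1 : (1 : ℕ) < n := by omega
    set i0 : Fin n := ⟨0, h0⟩
    set i1 : Fin n := ⟨1, h1⟩
    refine ⟨e b i0, e b i1, ?_⟩
    intro hcomm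
    have hanti : e b i0 * e b i1 = -(e b i1 * e b i0) := anticomm _ _
    have hner : e b i0 * e b i1 ≠ 0 := by
      have hne : i0 ∉ ({i1} : Finset (Fin n)) := by
        simp [i0, i1, Fin.ext_iff]
      obtain ⟨ε, hε, hm⟩ := e_mul_mS_of_not_mem b hne
      rw [← e_eq_mS b i1] at hm
      rw [hm]
      exact smul_ne_zero hε.ne_zero (mS_ne_zero b _)
    have : (2 : F) • (e b i0 * e b i1) = 0 := by
      rw [two_smul]
      nth_rewrite 2 [hcomm]
      exact ExteriorAlgebra.ι_add_mul_swap (b i0) (b i1)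
    rcases smul_eq_zero.mp this with h | h
    · exact htwo h
    · exact hner h
  · -- centrally essential
    intro r hr
    have hmem : r ∈ Submodule.span F (Set.range (mS b)) := hspan ▸ Submodule.mem_top
    obtain ⟨c, hc⟩ := (Submodule.mem_span_range_iff_exists_fun F).mp hmem
    let A : Finset (Finset (Fin n)) := Finset.univ.filter (fun S => c S ≠ 0)
    have hAne : A.Nonempty := by
      by_contra hA
      apply hr
      rw [← hc]
      apply Finset.sum_eq_zero
      intro S _
      have : c S = 0 := by
        by_contra hcS
        exact hA ⟨S, Finset.mem_filter.mpr ⟨Finset.mem_univ _, hcS⟩⟩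
      rw [this, zero_smul]
    obtain ⟨S₀, hS₀A, hminA⟩ := Finset.exists_min_image A Finset.card hAne
    have hS₀ : c S₀ ≠ 0 := (Finset.mem_filter.mp hS₀A).2
    have hmin : ∀ S, c S ≠ 0 → S₀.card ≤ S.card := fun S hS =>
      hminA S (Finset.mem_filter.mpr ⟨Finset.mem_univ _, hS⟩)
    have hcardS₀ : S₀.card ≤ n := by simpa using Finset.card_le_univ S₀
    have hcompl : S₀ᶜ.card = n - S₀.card := by
      rw [Finset.card_compl]; simp
    -- choose U
    obtain ⟨U, hU1, hU2, hU3⟩ :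
        ∃ U : Finset (Fin n), U ⊆ S₀ᶜ ∧ Even U.card ∧ n - 1 ≤ U.card + S₀.card := by
      by_cases hpar : Even S₀.card
      · -- S₀ ≠ univ since n odd
        have hne : S₀.card ≠ n := by
          intro h
          rw [h] at hpar
          rw [Nat.odd_iff] at hodd; rw [Nat.even_iff] at hpar
          omega
        have hlt : S₀.card < n := lt_of_le_of_ne hcardS₀ hne
        have hcne : S₀ᶜ.Nonempty := Finset.card_pos.mp (by omega)
        obtain ⟨k, hk⟩ := hcne
        refine ⟨S₀ᶜ.erase k, Finset.erase_subset _ _, ?_, ?_⟩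
        · rw [Finset.card_erase_of_mem hk, hcompl]
          have : Odd (n - S₀.card) := Nat.Odd.sub_even (by omega) hodd hpar
          exact Nat.Odd.sub_odd this odd_one
        · rw [Finset.card_erase_of_mem hk, hcompl]
          omega
      · refine ⟨S₀ᶜ, le_refl _, ?_, ?_⟩
        · rw [hcompl]
          exact Nat.Odd.sub_odd hodd (Nat.odd_iff.mpr (Nat.not_even_iff.mp hpar))
        · rw [hcompl]; omega
    obtain ⟨hne0, hcen⟩ := key b hodd r c hc S₀ hS₀ hmin U hU1 hU2 hU3
    have hUcen : mS b U ∈ Subring.center (ExteriorAlgebra F V) :=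
      mS_mem_center_of_even b hU2
    exact ⟨mS b U, hUcen, hne0, hcen⟩

end Main
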